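/- Under the virtual-queue update rule, the Lyapunov drift Δ(t) = (1/2)(‖Q(t+1)‖² − ‖Q(t)‖²) satisfies Δ(t) ≤ Q(t)ᵀ g(x(t)) + ‖g(x(t))‖² for every iteration t ∈ {0,1,2,…}, where g(x) = (g_1(x),…,g_m(x)), Q(t)ᵀ g(x(t)) = Σ_{k=1}^m Q_k(t) g_k(x(t)), and ‖·‖ is the Euclidean norm on ℝ^m. -/

import Mathlib

/-- The stacked constraint vector `g(x) = (g_1(x), …, g_m(x))` as an element of
Euclidean space `ℝ^m`. -/
noncomputable def gvec {n m : ℕ} (g : Fin m → EuclideanSpace ℝ (Fin n) → ℝ)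
    (x : EuclideanSpace ℝ (Fin n)) : EuclideanSpace ℝ (Fin m) :=
  WithLp.toLp 2 (fun k => g k x)

/-- Lyapunov drift bound.  Indexing convention: `x 0` denotes `x(−1)` and
`x (t+1)` denotes the iterate `x(t)`, so `Q 0 k = max {0, −g_k(x(−1))}` and
`Q (t+1) k = max {−g_k(x(t)), Q t k + g_k(x(t))}`.  Then for every iteration `t`,
`Δ(t) = (1/2)(‖Q(t+1)‖² − ‖Q(t)‖²) ≤ Q(t)ᵀ g(x(t)) + ‖g(x(t))‖²`. -/
theorem lyapunov_drift_bound {n m : ℕ}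
    (X : Set (EuclideanSpace ℝ (Fin n)))
    (g : Fin m → EuclideanSpace ℝ (Fin n) → ℝ)
    (x : ℕ → EuclideanSpace ℝ (Fin n)) (hx : ∀ t, x t ∈ X)
    (Q : ℕ → EuclideanSpace ℝ (Fin m))
    (hQ0 : ∀ k, Q 0 k = max 0 (-(g k (x 0))))
    (hQr : ∀ (t : ℕ) (k : Fin m),
      Q (t + 1) k = max (-(g k (x (t + 1)))) (Q t k + g k (x (t + 1)))) :
    ∀ t : ℕ,
      (1 / 2) * (‖Q (t + 1)‖ ^ 2 - ‖Q t‖ ^ 2) ≤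
        (∑ k, Q t k * g k (x (t + 1))) + ‖gvec g (x (t + 1))‖ ^ 2 := by
  intro t
  have hnorm : ∀ v : EuclideanSpace ℝ (Fin m), ‖v‖ ^ 2 = ∑ k, (v k) ^ 2 := by
    intro v
    rw [EuclideanSpace.norm_eq, Real.sq_sqrt (by positivity)]
    simp [Real.norm_eq_abs, sq_abs]
  have key : ∀ k : Fin m,
      (Q (t + 1) k) ^ 2 - (Q t k) ^ 2 ≤
        2 * (Q t k * g k (x (t + 1))) + 2 * (g k (x (t + 1))) ^ 2 := by
    intro k
    rw [hQr t k]
    rcases max_cases (-(g k (x (t + 1)))) (Q t k + g k (x (t + 1))) with ⟨h, _⟩ | ⟨h, _⟩ <;>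
      rw [h] <;> nlinarith [sq_nonneg (Q t k + g k (x (t + 1)))]
  have hsum := Finset.sum_le_sum (s := Finset.univ) (fun k _ => key k)
  rw [hnorm, hnorm]
  have : ‖gvec g (x (t + 1))‖ ^ 2 = ∑ k, (g k (x (t + 1))) ^ 2 := by
    rw [hnorm]; rfl
  rw [this]
  simp only [Finset.sum_sub_distrib, Finset.sum_add_distrib, ← Finset.mul_sum] at hsum ⊢
  linarith
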